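/- Let ([0,1]^d, F) be a discrete time regulatory network satisfying coordinatewise injectivity, with dynamical partitions P^t and Q^{t+1} = F^t(P^{t+1}). For each coordinate 1 ≤ i ≤ d and each t ∈ ℕ, the collection of projected intervals Q^t_i = { Π_i(J) : J ∈ Q^t } consists of pairwise disjoint intervals. -/
import Mathlib


/-- Heaviside function: `H(x) = 0` if `x ≤ 0`, `1` otherwise. -/
noncomputable def heav (x : ℝ) : ℝ := if x ≤ 0 then 0 else 1

/-- The discrete time regulatory network map
`F(x)_j = a x_j + (1−a) Σ_i K_{i,j} H(s_{i,j}(x_i − T_{i,j}))`. -/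
noncomputable def regNet (d : ℕ) (K T s : Matrix (Fin d) (Fin d) ℝ) (a : ℝ) :
    (Fin d → ℝ) → Fin d → ℝ :=
  fun x j => a * x j + (1 - a) * ∑ i, K i j * heav (s i j * (x i - T i j))

/-- The threshold partition `P_i` of `[0,1]`: atoms are the level sets of
`x ↦ (H(s_{i,j}(x − T_{i,j})))_j` intersected with `[0,1]`. -/
def basePartI (d : ℕ) (T s : Matrix (Fin d) (Fin d) ℝ) (i : Fin d) :
    Set (Set ℝ) :=
  {A | ∃ x ∈ Set.Icc (0:ℝ) 1, A = {y ∈ Set.Icc (0:ℝ) 1 |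
      ∀ j, heav (s i j * (y - T i j)) = heav (s i j * (x - T i j))}}

/-- The base partition `P = ∏_i P_i` of `[0,1]^d`. -/
def baseP (d : ℕ) (T s : Matrix (Fin d) (Fin d) ℝ) :
    Set (Set (Fin d → ℝ)) :=
  {A | ∃ g : Fin d → Set ℝ, (∀ i, g i ∈ basePartI d T s i) ∧
      A = {x | ∀ i, x i ∈ g i}}

/-- Dynamical partitions: `dynPartition F P t` is the paper's `P^{t+1}`
(so `dynPartition F P 0 = P = P^1`). -/
def dynPartition {X : Type*} (F : X → X) (P : Set (Set X)) : ℕ → Set (Set X)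
  | 0 => P
  | (t + 1) => {S | ∃ I ∈ dynPartition F P t, ∃ J ∈ P,
      S = F ⁻¹' I ∩ J ∧ S ≠ ∅}

/-- `Q^t = F^{t-1}(P^t)`, the image at time `t−1` of the dynamical partition `P^t`
(for `t ≥ 1`). -/
noncomputable def Qcoll (d : ℕ) (K T s : Matrix (Fin d) (Fin d) ℝ) (a : ℝ)
    (t : ℕ) : Set (Set (Fin d → ℝ)) :=
  (fun S => (regNet d K T s a)^[t - 1] '' S) ''
    dynPartition (regNet d K T s a) (baseP d T s) (t - 1)

/-- Projection of a set on the `i`-th coordinate. -/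
def proj {d : ℕ} (i : Fin d) (A : Set (Fin d → ℝ)) : Set ℝ :=
  (fun x => x i) '' A

/-- `Q^t_i`: the `i`-th coordinate projections of the sets in `Q^t`. -/
noncomputable def Qproj (d : ℕ) (K T s : Matrix (Fin d) (Fin d) ℝ) (a : ℝ)
    (t : ℕ) (i : Fin d) : Set (Set ℝ) :=
  {J | ∃ A ∈ Qcoll d K T s a t, J = proj i A}

/-- Coordinatewise injectivity: for each coordinate `j`, distinct affine contractions
`x ↦ a x + (1−a) Σ_i ε_i K_{i,j}` of the family `F_j` have disjoint images of `[0,1]`. -/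
def CoordInj (d : ℕ) (K : Matrix (Fin d) (Fin d) ℝ) (a : ℝ) : Prop :=
  ∀ j : Fin d, ∀ ε ε' : Fin d → Bool,
    (∑ i, if ε i then K i j else 0) ≠ (∑ i, if ε' i then K i j else 0) →
    Disjoint
      ((fun x => a * x + (1 - a) * ∑ i, if ε i then K i j else 0) '' Set.Icc (0:ℝ) 1)
      ((fun x => a * x + (1 - a) * ∑ i, if ε' i then K i j else 0) '' Set.Icc (0:ℝ) 1)

section Aux

variable {d : ℕ} {K T s : Matrix (Fin d) (Fin d) ℝ} {a : ℝ}

lemma heav_cases (x : ℝ) : heav x = 0 ∨ heav x = 1 := by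
  unfold heav; split <;> simp

lemma basePartI_subset {i : Fin d} {h : Set ℝ} (hh : h ∈ basePartI d T s i) :
    h ⊆ Set.Icc 0 1 := by
  obtain ⟨x, hx, rfl⟩ := hh
  intro y hy; exact hy.1

lemma basePartI_nonempty {i : Fin d} {h : Set ℝ} (hh : h ∈ basePartI d T s i) :
    h.Nonempty := by
  obtain ⟨x, hx, rfl⟩ := hh
  exact ⟨x, hx, fun j => rfl⟩

lemma basePartI_eq_or_disjoint {i : Fin d} {h h' : Set ℝ}
    (hh : h ∈ basePartI d T s i) (hh' : h' ∈ basePartI d T s i) :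
    h = h' ∨ Disjoint h h' := by
  by_cases hdis : Disjoint h h'
  · exact Or.inr hdis
  · left
    obtain ⟨z, hz, hz'⟩ := Set.not_disjoint_iff.mp hdis
    obtain ⟨x, hx, rfl⟩ := hh
    obtain ⟨x', hx', rfl⟩ := hh'
    obtain ⟨-, hzs⟩ := hz
    obtain ⟨-, hzs'⟩ := hz'
    ext y
    simp only [Set.mem_setOf_eq]
    constructor
    · rintro ⟨hy1, hy2⟩
      exact ⟨hy1, fun j => by rw [hy2 j, ← hzs j, hzs' j]⟩
    · rintro ⟨hy1, hy2⟩
      exact ⟨hy1, fun j => by rw [hy2 j, ← hzs' j, hzs j]⟩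

lemma proj_prod {g : Fin d → Set ℝ} (hne : ∀ k, (g k).Nonempty) (i : Fin d) :
    proj i {x | ∀ k, x k ∈ g k} = g i := by
  ext z
  constructor
  · rintro ⟨x, hx, rfl⟩
    exact hx i
  · intro hz
    refine ⟨Function.update (fun k => (hne k).some) i z, fun k => ?_, ?_⟩
    · rcases eq_or_ne k i with rfl | hk
      · simpa using hz
      · simpa [Function.update_of_ne hk] using (hne k).some_mem
    · simp

lemma baseP_struct {J : Set (Fin d → ℝ)} (hJ : J ∈ baseP d T s) :
    ∃ (h : Fin d → Set ℝ) (ε : Fin d → Fin d → Bool),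
      (∀ i, h i ∈ basePartI d T s i) ∧ J = {x | ∀ i, x i ∈ h i} ∧
      ∀ x ∈ J, ∀ j, regNet d K T s a x j =
        a * x j + (1 - a) * ∑ m, (if ε m j then K m j else 0) := by
  classical
  obtain ⟨g, hg, rfl⟩ := hJ
  have hg' : ∀ i, ∃ x, x ∈ Set.Icc (0:ℝ) 1 ∧ g i = {y ∈ Set.Icc (0:ℝ) 1 |
      ∀ j, heav (s i j * (y - T i j)) = heav (s i j * (x - T i j))} := by
    intro i
    obtain ⟨x, hx1, hx2⟩ := hg i
    exact ⟨x, hx1, hx2⟩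
  choose xw hxw hgw using hg'
  refine ⟨g, fun m j => if heav (s m j * (xw m - T m j)) = 1 then true else false,
    hg, rfl, ?_⟩
  intro x hx j
  have hx' : ∀ m, x m ∈ g m := hx
  unfold regNet
  congr 1
  congr 1
  apply Finset.sum_congr rfl
  intro m _
  have hmem := hx' m
  rw [hgw m] at hmem
  have hsig : heav (s m j * (x m - T m j)) = heav (s m j * (xw m - T m j)) := hmem.2 j
  rw [hsig]
  rcases heav_cases (s m j * (xw m - T m j)) with h0 | h1
  · rw [h0]
    have : ¬ ((0:ℝ) = 1) := by norm_num
    simp [h0, this]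
  · simp [h1]

end Aux

lemma affine_injective {c b : ℝ} (hc : c ≠ 0) :
    Function.Injective (fun y : ℝ => c * y + b) := by
  intro x y h
  simp only [] at h
  exact mul_left_cancel₀ hc (add_right_cancel h)

lemma key (d : ℕ) (K T s : Matrix (Fin d) (Fin d) ℝ) (a : ℝ)
    (ha : 0 < a) (hinj : CoordInj d K a) (t : ℕ) :
    ∃ (Gd : Set (Fin d → ℝ) → Fin d → Set ℝ) (Cd : Set (Fin d → ℝ) → Fin d → ℝ),
      (∀ S ∈ dynPartition (regNet d K T s a) (baseP d T s) t,
        (∀ i, (Gd S i).Nonempty) ∧ (∀ i, Gd S i ⊆ Set.Icc 0 1) ∧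
        S = {x | ∀ i, x i ∈ Gd S i} ∧
        ∀ x ∈ S, ∀ i, (regNet d K T s a)^[t] x i = a ^ t * x i + Cd S i) ∧
      (∀ S ∈ dynPartition (regNet d K T s a) (baseP d T s) t,
       ∀ S' ∈ dynPartition (regNet d K T s a) (baseP d T s) t, ∀ i : Fin d,
        (Cd S i = Cd S' i ∧ Gd S i = Gd S' i) ∨
        Disjoint ((fun y => a ^ t * y + Cd S i) '' Gd S i)
                 ((fun y => a ^ t * y + Cd S' i) '' Gd S' i)) := by
  classical
  induction t with
  | zero =>
    have hch : ∀ S : Set (Fin d → ℝ), ∃ g : Fin d → Set ℝ,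
        S ∈ baseP d T s →
          ((∀ i, g i ∈ basePartI d T s i) ∧ S = {x | ∀ i, x i ∈ g i}) := by
      intro S
      by_cases h : S ∈ baseP d T s
      · obtain ⟨g, hg1, hg2⟩ := h
        exact ⟨g, fun _ => ⟨hg1, hg2⟩⟩
      · exact ⟨fun _ => ∅, fun hc => absurd hc h⟩
    choose Gd hGd using hch
    refine ⟨Gd, fun _ _ => 0, ?_, ?_⟩
    · intro S hS
      obtain ⟨hmem, hSeq⟩ := hGd S hS
      exact ⟨fun i => basePartI_nonempty (hmem i), fun i => basePartI_subset (hmem i),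
        hSeq, fun x _ i => by simp⟩
    · intro S hS S' hS' i
      obtain ⟨hmem, -⟩ := hGd S hS
      obtain ⟨hmem', -⟩ := hGd S' hS'
      rcases basePartI_eq_or_disjoint (hmem i) (hmem' i) with heq | hdis
      · exact Or.inl ⟨rfl, heq⟩
      · right
        simpa using hdis
  | succ t IH =>
    obtain ⟨Gd, Cd, hprop, hcmp⟩ := IH
    have hch : ∀ S : Set (Fin d → ℝ),
        ∃ (I : Set (Fin d → ℝ)) (h : Fin d → Set ℝ) (ε : Fin d → Fin d → Bool),
          S ∈ dynPartition (regNet d K T s a) (baseP d T s) (t + 1) →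
          (I ∈ dynPartition (regNet d K T s a) (baseP d T s) t ∧
           (∀ i, h i ∈ basePartI d T s i) ∧
           (∀ x : Fin d → ℝ, (∀ i, x i ∈ h i) → ∀ j, regNet d K T s a x j =
              a * x j + (1 - a) * ∑ m, (if ε m j then K m j else 0)) ∧
           S = (regNet d K T s a) ⁻¹' I ∩ {x | ∀ i, x i ∈ h i} ∧ S.Nonempty) := by
      intro S
      by_cases hS : S ∈ dynPartition (regNet d K T s a) (baseP d T s) (t + 1)
      · simp only [dynPartition, Set.mem_setOf_eq] at hS
        obtain ⟨I, hI, J, hJ, hSeq, hSne⟩ := hS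
        obtain ⟨h, ε, hh, hJeq, hFeq⟩ := baseP_struct (K := K) (a := a) hJ
        refine ⟨I, h, ε, fun _ => ⟨hI, hh, ?_, by rw [hSeq, hJeq],
          Set.nonempty_iff_ne_empty.mpr hSne⟩⟩
        intro x hx j
        exact hFeq x (by rw [hJeq]; exact hx) j
      · exact ⟨∅, fun _ => ∅, fun _ _ => false, fun hc => absurd hc hS⟩
    choose If hfP εf hspec using hch
    refine ⟨fun S i => (fun y => a * y +
          (1 - a) * ∑ m, (if εf S m i then K m i else 0)) ⁻¹' (Gd (If S) i) ∩ hfP S i,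
      fun S i => a ^ t * ((1 - a) * ∑ m, (if εf S m i then K m i else 0)) + Cd (If S) i,
      ?_, ?_⟩
    · intro S hS
      obtain ⟨hIdyn, hh, hFeq, hSeq, hSne⟩ := hspec S hS
      obtain ⟨hIne, hIsub, hIeq, hIit⟩ := hprop (If S) hIdyn
      have hSmem : ∀ x : Fin d → ℝ, x ∈ S ↔
          (regNet d K T s a x ∈ If S ∧ ∀ i, x i ∈ hfP S i) := by
        intro x
        conv_lhs => rw [hSeq]
        exact Iff.rfl
      have hmem : ∀ x : Fin d → ℝ, x ∈ S ↔ ∀ i, x i ∈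
          (fun y => a * y + (1 - a) * ∑ m, (if εf S m i then K m i else 0)) ⁻¹'
            (Gd (If S) i) ∩ hfP S i := by
        intro x
        rw [hSmem]
        constructor
        · rintro ⟨hxI, hxJ⟩
          intro i
          refine ⟨?_, hxJ i⟩
          have h1 : regNet d K T s a x ∈ {x | ∀ i, x i ∈ Gd (If S) i} := by
            rw [← hIeq]; exact hxI
          have h2 := h1 i
          rw [hFeq x hxJ i] at h2
          exact h2
        · intro hx
          have hxJ : ∀ i, x i ∈ hfP S i := fun i => (hx i).2
          refine ⟨?_, hxJ⟩
          rw [hIeq]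
          intro i
          rw [hFeq x hxJ i]
          exact (hx i).1
      refine ⟨?_, ?_, Set.ext hmem, ?_⟩
      · obtain ⟨x, hx⟩ := hSne
        exact fun i => ⟨x i, (hmem x).mp hx i⟩
      · exact fun i y hy => basePartI_subset (hh i) hy.2
      · intro x hx i
        have hxI : regNet d K T s a x ∈ If S := ((hSmem x).mp hx).1
        have hxJ : ∀ i, x i ∈ hfP S i := ((hSmem x).mp hx).2
        show (regNet d K T s a)^[t+1] x i = a ^ (t+1) * x i +
          (a ^ t * ((1 - a) * ∑ m, (if εf S m i then K m i else 0)) + Cd (If S) i)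
        rw [Function.iterate_succ_apply, hIit (regNet d K T s a x) hxI i,
          hFeq x hxJ i, pow_succ]
        ring
    · intro S hS S' hS' i
      beta_reduce
      obtain ⟨hIdyn, hh, hFeq, hSeq, hSne⟩ := hspec S hS
      obtain ⟨hIdyn', hh', hFeq', hSeq', hSne'⟩ := hspec S' hS'
      have hane : a ^ t ≠ 0 := pow_ne_zero _ (ne_of_gt ha)
      have hane' : a ^ (t + 1) ≠ 0 := pow_ne_zero _ (ne_of_gt ha)
      rcases hcmp (If S) hIdyn (If S') hIdyn' i with ⟨hC, hG⟩ | hdisI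
      · by_cases hee : (∑ m, (if εf S m i then K m i else 0))
            = (∑ m, (if εf S' m i then K m i else 0))
        · rcases basePartI_eq_or_disjoint (hh i) (hh' i) with hfeq | hfd
          · left
            constructor
            · rw [hee, hC]
            · rw [hee, hG, hfeq]
          · right
            rw [hee, hC, hG]
            have hgdis : Disjoint
                ((fun y => a * y + (1 - a) * ∑ m, (if εf S' m i then K m i else 0)) ⁻¹'
                  Gd (If S') i ∩ hfP S i)
                ((fun y => a * y + (1 - a) * ∑ m, (if εf S' m i then K m i else 0)) ⁻¹'
                  Gd (If S') i ∩ hfP S' i) :=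
              hfd.mono Set.inter_subset_right Set.inter_subset_right
            exact hgdis.image (affine_injective hane').injOn
              (Set.subset_univ _) (Set.subset_univ _)
        · right
          have hdisψ := hinj i (fun m => εf S m i) (fun m => εf S' m i) hee
          have hginj : Function.Injective
              (fun y : ℝ => a ^ t * y + Cd (If S) i) := affine_injective hane
          have hd2 : Disjoint
              ((fun y : ℝ => a ^ t * y + Cd (If S) i) ''
                ((fun x => a * x + (1 - a) * ∑ m, (if εf S m i then K m i else 0)) ''
                  Set.Icc 0 1))
              ((fun y : ℝ => a ^ t * y + Cd (If S) i) ''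
                ((fun x => a * x + (1 - a) * ∑ m, (if εf S' m i then K m i else 0)) ''
                  Set.Icc 0 1)) :=
            hdisψ.image hginj.injOn (Set.subset_univ _) (Set.subset_univ _)
          refine hd2.mono ?_ ?_
          · rintro z ⟨y, hy, rfl⟩
            refine ⟨a * y + (1 - a) * ∑ m, (if εf S m i then K m i else 0),
              ⟨y, basePartI_subset (hh i) hy.2, rfl⟩, by ring⟩
          · rintro z ⟨y, hy, rfl⟩
            refine ⟨a * y + (1 - a) * ∑ m, (if εf S' m i then K m i else 0),
              ⟨y, basePartI_subset (hh' i) hy.2, rfl⟩, by rw [← hC]; ring⟩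
      · right
        refine hdisI.mono ?_ ?_
        · rintro z ⟨y, hy, rfl⟩
          exact ⟨a * y + (1 - a) * ∑ m, (if εf S m i then K m i else 0), hy.1, by ring⟩
        · rintro z ⟨y, hy, rfl⟩
          exact ⟨a * y + (1 - a) * ∑ m, (if εf S' m i then K m i else 0), hy.1, by ring⟩

lemma proj_iterate {d : ℕ} {K T s : Matrix (Fin d) (Fin d) ℝ} {a : ℝ} {t : ℕ}
    {S : Set (Fin d → ℝ)} {g : Fin d → Set ℝ} {c : Fin d → ℝ}
    (hne : ∀ k, (g k).Nonempty) (hSeq : S = {x | ∀ k, x k ∈ g k})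
    (hit : ∀ x ∈ S, ∀ i, (regNet d K T s a)^[t] x i = a ^ t * x i + c i) (i : Fin d) :
    proj i ((regNet d K T s a)^[t] '' S) = (fun y => a ^ t * y + c i) '' g i := by
  ext z
  constructor
  · rintro ⟨w, ⟨x, hx, rfl⟩, rfl⟩
    refine ⟨x i, ?_, (hit x hx i).symm⟩
    rw [hSeq] at hx
    exact hx i
  · rintro ⟨y, hy, rfl⟩
    have hx : Function.update (fun k => (hne k).some) i y ∈ S := by
      rw [hSeq]
      intro k
      rcases eq_or_ne k i with rfl | hk
      · simpa using hy
      · simpa [Function.update_of_ne hk] using (hne k).some_mem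
    refine ⟨(regNet d K T s a)^[t] (Function.update (fun k => (hne k).some) i y),
      ⟨_, hx, rfl⟩, ?_⟩
    show (regNet d K T s a)^[t] (Function.update (fun k => (hne k).some) i y) i
      = a ^ t * y + c i
    rw [hit _ hx i, Function.update_self]

/-- for a coordinatewise injective discrete time regulatory network,
for each coordinate `i` and each `t ≥ 1`, the projected intervals in `Q^t_i` are
pairwise disjoint. -/
theorem stmt_8 (d : ℕ) (K T s : Matrix (Fin d) (Fin d) ℝ) (a : ℝ)
    (ha0 : 0 ≤ a) (ha1 : a < 1)
    (hK : ∀ i j, K i j ∈ Set.Icc (0:ℝ) 1) (hKnorm : ∀ j, ∑ i, K i j = 1)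
    (hT : ∀ i j, T i j ∈ Set.Icc (0:ℝ) 1)
    (hs : ∀ i j, s i j = -1 ∨ s i j = 0 ∨ s i j = 1)
    (hcompat : ∀ i j, s i j = 0 ↔ K i j = 0)
    (hinj : CoordInj d K a) :
    ∀ t : ℕ, 1 ≤ t → ∀ i : Fin d,
      (Qproj d K T s a t i).Pairwise Disjoint := by
  classical
  intro t ht i A hA B hB hAB
  simp only [Qproj, Qcoll, Set.mem_setOf_eq, Set.mem_image] at hA hB
  obtain ⟨QA, ⟨SA, hSA, rfl⟩, rfl⟩ := hA
  obtain ⟨QB, ⟨SB, hSB, rfl⟩, rfl⟩ := hB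
  rcases ha0.eq_or_lt with ha | ha
  · -- a = 0
    subst ha
    obtain ⟨τ, rfl⟩ := Nat.exists_eq_add_of_le ht
    simp only [Nat.add_sub_cancel_left] at hSA hSB hAB ⊢
    match τ, hSA, hSB, hAB with
    | 0, hSA, hSB, hAB =>
      -- t = 1 : base partition case
      have hproj : ∀ S' : Set (Fin d → ℝ), S' ∈ baseP d T s →
          ∃ h' ∈ basePartI d T s i,
            proj i ((regNet d K T s (0:ℝ))^[0] '' S') = h' := by
        intro S' hS'
        obtain ⟨g, hg, rfl⟩ := hS'
        refine ⟨g i, hg i, ?_⟩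
        rw [Function.iterate_zero, Set.image_id]
        exact proj_prod (fun k => basePartI_nonempty (hg k)) i
      obtain ⟨hA', hAmem, hAeq⟩ := hproj SA hSA
      obtain ⟨hB', hBmem, hBeq⟩ := hproj SB hSB
      rw [hAeq, hBeq] at hAB ⊢
      rcases basePartI_eq_or_disjoint hAmem hBmem with heq | hdis
      · exact absurd heq hAB
      · exact hdis
    | (τ' + 1), hSA, hSB, hAB =>
      -- t ≥ 2 : images are singletons
      have hsing : ∀ S' : Set (Fin d → ℝ),
          S' ∈ dynPartition (regNet d K T s 0) (baseP d T s) (τ' + 1) →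
          ∃ p : ℝ, proj i ((regNet d K T s 0)^[τ' + 1] '' S') = {p} := by
        intro S' hS'
        simp only [dynPartition, Set.mem_setOf_eq] at hS'
        obtain ⟨I, hI, J, hJ, hSeq, hSne⟩ := hS'
        obtain ⟨h, ε, hh, hJeq, hFeq⟩ := baseP_struct (K := K) (a := (0:ℝ)) hJ
        obtain ⟨x₀, hx₀⟩ := Set.nonempty_iff_ne_empty.mpr hSne
        have hSJ : ∀ x ∈ S', x ∈ J := by
          rw [hSeq]; exact fun x hx => hx.2
        have hconst : ∀ x ∈ S', regNet d K T s 0 x = regNet d K T s 0 x₀ := by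
          intro x hx
          funext j
          rw [hFeq x (hSJ x hx) j, hFeq x₀ (hSJ x₀ hx₀) j]
          ring
        have himg : (regNet d K T s 0)^[τ' + 1] '' S'
            = {(regNet d K T s 0)^[τ'] (regNet d K T s 0 x₀)} := by
          ext z
          simp only [Set.mem_image, Set.mem_singleton_iff]
          constructor
          · rintro ⟨x, hx, rfl⟩
            rw [Function.iterate_succ_apply, hconst x hx]
          · rintro rfl
            exact ⟨x₀, hx₀, by rw [Function.iterate_succ_apply, hconst x₀ hx₀]⟩
        refine ⟨(regNet d K T s 0)^[τ'] (regNet d K T s 0 x₀) i, ?_⟩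
        rw [himg]
        simp [proj]
      obtain ⟨pA, hpA⟩ := hsing SA hSA
      obtain ⟨pB, hpB⟩ := hsing SB hSB
      rw [hpA, hpB] at hAB ⊢
      exact Set.disjoint_singleton.mpr (fun h => hAB (by rw [h]))
  · -- 0 < a
    obtain ⟨Gd, Cd, hprop, hcmp⟩ := key d K T s a ha hinj (t - 1)
    obtain ⟨hneA, -, hAeq, hAit⟩ := hprop SA hSA
    obtain ⟨hneB, -, hBeq, hBit⟩ := hprop SB hSB
    have hA' := proj_iterate hneA hAeq hAit i
    have hB' := proj_iterate hneB hBeq hBit i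
    rw [hA', hB'] at hAB ⊢
    rcases hcmp SA hSA SB hSB i with ⟨hC, hG⟩ | hdis
    · exact absurd (by rw [hC, hG]) hAB
    · exact hdis
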